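/- Let k be a field of characteristic p > 0 and let P_n ∈ k[t] be defined by P_0 = 1, P_1 = t, P_{n+1} = t P_n − P_{n−1}. Then the set of irreducible factors (up to units) of the polynomials {P_{p^e − 2} : e ∈ ℕ, p^e ≥ 2} is infinite. -/

import Mathlib

open Polynomial

/-- Fibers of `a ↦ a + a⁻¹` lie in root sets of quadratics, which are finite. -/
lemma stmt12_quad_finite {K : Type*} [Field K] (v : K) :
    {a : K | a ^ 2 - v * a + 1 = 0}.Finite := by
  by_cases hne : ({a : K | a ^ 2 - v * a + 1 = 0}).Nonempty
  · obtain ⟨a₀, ha₀⟩ := hne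
    simp only [Set.mem_setOf_eq] at ha₀
    apply Set.Finite.subset ((Set.finite_singleton (v - a₀)).insert a₀)
    intro a ha
    simp only [Set.mem_setOf_eq] at ha
    have h : (a - a₀) * (a + a₀ - v) = 0 := by linear_combination ha - ha₀
    rcases mul_eq_zero.mp h with h | h
    · left; exact sub_eq_zero.mp h
    · right
      simp only [Set.mem_singleton_iff]
      linear_combination h
  · rw [Set.not_nonempty_iff_eq_empty] at hne
    rw [hne]; exact Set.finite_empty

/-- Key identity: `a^n (a²-1) P_n(a + a⁻¹) = a^(2n+2) - 1`. -/
lemma stmt12_key {k : Type*} [Field k] (P : ℕ → Polynomial k) (hP0 : P 0 = 1)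
    (hP1 : P 1 = Polynomial.X)
    (hPrec : ∀ n : ℕ, 1 ≤ n → P (n + 1) = Polynomial.X * P n - P (n - 1))
    {K : Type*} [Field K] [Algebra k K] {a : K} (ha : a ≠ 0) (n : ℕ) :
    a ^ n * (a ^ 2 - 1) * Polynomial.aeval (a + a⁻¹) (P n) = a ^ (2 * n + 2) - 1 := by
  have hinv : a * a⁻¹ = 1 := mul_inv_cancel₀ ha
  have H : ∀ m : ℕ,
      (a ^ m * (a ^ 2 - 1) * Polynomial.aeval (a + a⁻¹) (P m) = a ^ (2 * m + 2) - 1) ∧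
      (a ^ (m + 1) * (a ^ 2 - 1) * Polynomial.aeval (a + a⁻¹) (P (m + 1))
        = a ^ (2 * (m + 1) + 2) - 1) := by
    intro m
    induction m with
    | zero =>
      constructor
      · rw [hP0]; simp
      · rw [hP1]; simp only [aeval_X, pow_succ, pow_zero, one_mul]
        field_simp
        try ring
    | succ m ih =>
      refine ⟨ih.2, ?_⟩
      have hrec := hPrec (m + 1) (by omega)
      simp only [Nat.add_sub_cancel] at hrec
      rw [hrec, map_sub, map_mul, aeval_X]
      have A1 := ih.2
      have A2 := ih.1
      have haux : a * (a + a⁻¹) = a ^ 2 + 1 := by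
        field_simp
      calc a ^ (m + 1 + 1) * (a ^ 2 - 1) *
            ((a + a⁻¹) * Polynomial.aeval (a + a⁻¹) (P (m + 1))
              - Polynomial.aeval (a + a⁻¹) (P m))
          = (a * (a + a⁻¹)) *
              (a ^ (m + 1) * (a ^ 2 - 1) * Polynomial.aeval (a + a⁻¹) (P (m + 1)))
            - a ^ 2 * (a ^ m * (a ^ 2 - 1) * Polynomial.aeval (a + a⁻¹) (P m)) := by
            ring
        _ = (a ^ 2 + 1) * (a ^ (2 * (m + 1) + 2) - 1) - a ^ 2 * (a ^ (2 * m + 2) - 1) := by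
            rw [A1, A2, haux]
        _ = a ^ (2 * (m + 1 + 1) + 2) - 1 := by ring
  exact (H n).1

theorem stmt12 {k : Type*} [Field k] (p : ℕ) (hp : p.Prime) [CharP k p]
    (P : ℕ → Polynomial k) (hP0 : P 0 = 1) (hP1 : P 1 = Polynomial.X)
    (hPrec : ∀ n : ℕ, 1 ≤ n → P (n + 1) = Polynomial.X * P n - P (n - 1)) :
    {g : Polynomial k | g.Monic ∧ Irreducible g ∧
      ∃ e : ℕ, 2 ≤ p ^ e ∧ g ∣ P (p ^ e - 2)}.Infinite := by
  classical
  set T : Set (Polynomial k) := {g : Polynomial k | g.Monic ∧ Irreducible g ∧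
      ∃ e : ℕ, 2 ≤ p ^ e ∧ g ∣ P (p ^ e - 2)} with hT
  by_contra hfin
  rw [Set.not_infinite] at hfin
  set K := AlgebraicClosure k
  -- the set of roots in K of all polynomials in T
  set R : Set K := ⋃ g ∈ T, {v : K | Polynomial.aeval v g = 0} with hRdef
  have hR : R.Finite := by
    refine Set.Finite.biUnion hfin (fun g hg => ?_)
    have hg0 : g ≠ 0 := hg.2.1.ne_zero
    have : {v : K | Polynomial.aeval v g = 0}
        = {v : K | (g.map (algebraMap k K)).IsRoot v} := by
      ext v
      simp [Polynomial.IsRoot, Polynomial.eval_map, Polynomial.aeval_def]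
    rw [this]
    exact Polynomial.finite_setOf_isRoot
      (by simpa using (Polynomial.map_ne_zero_iff
        (algebraMap k K).injective).mpr hg0)
  -- the bad set B
  set B : Set K := ({0, 1, -1} : Set K) ∪ ⋃ v ∈ R, {a : K | a ^ 2 - v * a + 1 = 0}
    with hBdef
  have hB : B.Finite := by
    exact Set.Finite.union (Set.toFinite _)
      (Set.Finite.biUnion hR (fun v _ => stmt12_quad_finite v))
  set M := hB.toFinset.card with hM
  set e := M + 1 with he
  set q := p ^ e with hq
  have hq2 : 2 ≤ q := le_trans hp.two_le (Nat.le_self_pow (by omega) p)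
  have hMq : M < q := by
    have h1 : M < p ^ M := Nat.lt_pow_self (n := M) hp.one_lt
    have h2 : p ^ M ≤ p ^ (M + 1) := Nat.pow_le_pow_right hp.one_lt.le (by omega)
    rw [hq, he]
    exact lt_of_lt_of_le h1 h2
  -- the polynomial X^q - X over K
  set f : Polynomial K := Polynomial.X ^ q - Polynomial.X with hf
  have hsep : f.Separable := galois_poly_separable p q (dvd_pow_self p (by omega : e ≠ 0))
  have hdeg : f.natDegree = q := FiniteField.X_pow_card_sub_X_natDegree_eq K (by omega)
  have hcard : Fintype.card (f.rootSet K) = q := by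
    rw [Polynomial.card_rootSet_eq_natDegree hsep (IsAlgClosed.splits _), hdeg]
  have hsub : f.rootSet K ⊆ B := by
    intro a ha
    rw [Polynomial.mem_rootSet'] at ha
    have haq : a ^ q = a := by
      have := ha.2
      simp only [hf, map_sub, map_pow, aeval_X] at this
      exact sub_eq_zero.mp this
    by_cases h0 : a = 0
    · exact Or.inl (by simp [h0])
    by_cases h1 : a ^ 2 = 1
    · have : (a - 1) * (a + 1) = 0 := by linear_combination h1
      rcases mul_eq_zero.mp this with h | h
      · exact Or.inl (by simp [sub_eq_zero.mp h])
      · refine Or.inl ?_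
        have : a = -1 := by linear_combination h
        simp [this]
    -- main case
    · have hkey := stmt12_key P hP0 hP1 hPrec (K := K) h0 (q - 2)
      have hexp : 2 * (q - 2) + 2 = 2 * (q - 1) := by omega
      have haq1 : a ^ (q - 1) = 1 := by
        have : a ^ (q - 1) * a = a ^ q := by
          rw [← pow_succ]
          congr 1
          omega
        rw [haq] at this
        have := mul_right_cancel₀ h0 (this.trans (one_mul a).symm)
        exact this
      have hrhs : a ^ (2 * (q - 2) + 2) - 1 = 0 := by
        rw [hexp, mul_comm, pow_mul, haq1]
        simp
      rw [hrhs] at hkey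
      have haeval : Polynomial.aeval (a + a⁻¹) (P (q - 2)) = 0 := by
        have h2 : a ^ (q - 2) ≠ 0 := pow_ne_zero _ h0
        have h3 : a ^ 2 - 1 ≠ 0 := sub_ne_zero.mpr h1
        rcases mul_eq_zero.mp hkey with h | h
        · rcases mul_eq_zero.mp h with h' | h'
          · exact absurd h' h2
          · exact absurd h' h3
        · exact h
      set c : K := a + a⁻¹ with hc
      have hint : IsIntegral k c := Algebra.IsIntegral.isIntegral c
      have hgT : minpoly k c ∈ T := by
        refine ⟨minpoly.monic hint, minpoly.irreducible hint, e, hq2, ?_⟩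
        exact minpoly.dvd k c haeval
      have hcR : c ∈ R := by
        rw [hRdef]
        exact Set.mem_biUnion hgT (minpoly.aeval k c)
      refine Or.inr ?_
      refine Set.mem_biUnion hcR ?_
      have : a ^ 2 - c * a + 1 = 0 := by
        rw [hc]
        rw [add_mul, inv_mul_cancel₀ h0]
        try ring
      exact this
  -- cardinality contradiction
  have hle : q ≤ M := by
    have h1 : (f.rootSet K).toFinset ⊆ hB.toFinset := by
      intro x hx
      rw [Set.mem_toFinset] at hx
      rw [Set.Finite.mem_toFinset]
      exact hsub hx
    have h2 := Finset.card_le_card h1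
    rwa [Set.toFinset_card, hcard] at h2
  omega
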